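/- Let E be the elliptic curve y² + y = x³ over an algebraically closed field k of characteristic 2, with V = H¹_dR(E/k) two-dimensional with basis v₁, v₂, and let the group A = {(u,r,t) : u ∈ F₄^×, t ∈ F₄, t² + t + r³ = 0} act on V by g_{u,r,t}·v₁ = u²v₁ and g_{u,r,t}·v₂ = u²t·v₁ + u·v₂. Then V has exactly one nonzero proper A-invariant subspace, namely span(v₁); in particular V is an indecomposable k[A]-module. -/
import Mathlib


/-- The action of `g_{u,r,t}` on `H¹_dR(E/k)` in the basis `v₁ = (1,0)`, `v₂ = (0,1)`:
`v₁ ↦ u²·v₁`, `v₂ ↦ u²t·v₁ + u·v₂`. -/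
noncomputable def dRAction (k : Type*) [Field k] (u t : k) : (k × k) →ₗ[k] (k × k) where
  toFun v := (u ^ 2 * v.1 + u ^ 2 * t * v.2, u * v.2)
  map_add' v w := by
    apply Prod.ext <;> simp <;> ring
  map_smul' c v := by
    apply Prod.ext <;> simp <;> ring

/-- A subspace `W ⊆ H¹_dR(E/k)` is `A`-invariant if it is preserved by every `g_{u,r,t}`
with `u ∈ 𝔽₄ˣ` (i.e. `u³ = 1`), `r, t ∈ 𝔽₄` (i.e. `r⁴ = r`, `t⁴ = t`) and `t² + t + r³ = 0`. -/
def dRInvariant (k : Type*) [Field k] (W : Submodule k (k × k)) : Prop :=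
  ∀ u r t : k, u ^ 3 = 1 → r ^ 4 = r → t ^ 4 = t → t ^ 2 + t + r ^ 3 = 0 →
    ∀ v ∈ W, dRAction k u t v ∈ W

section aux
variable (k : Type*) [Field k] [CharP k 2]

lemma span_props :
    dRInvariant k (Submodule.span k {((1 : k), (0 : k))}) ∧
    Submodule.span k {((1 : k), (0 : k))} ≠ ⊥ ∧
    Submodule.span k {((1 : k), (0 : k))} ≠ ⊤ := by
  refine ⟨?_, ?_, ?_⟩
  · intro u r t _ _ _ _ v hv
    rw [Submodule.mem_span_singleton] at hv ⊢
    obtain ⟨a, rfl⟩ := hv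
    refine ⟨u ^ 2 * a, ?_⟩
    apply Prod.ext <;> simp [dRAction] <;> ring
  · intro h
    have : ((1 : k), (0 : k)) ∈ (⊥ : Submodule k (k × k)) := by
      rw [← h]; exact Submodule.mem_span_singleton_self _
    simp at this
  · intro h
    have : ((0 : k), (1 : k)) ∈ Submodule.span k {((1 : k), (0 : k))} := by
      rw [h]; trivial
    rw [Submodule.mem_span_singleton] at this
    obtain ⟨a, ha⟩ := this
    have h2 := congrArg Prod.snd ha
    simp at h2

lemma key_lemma (W : Submodule k (k × k)) (hInv : dRInvariant k W)
    (hbot : W ≠ ⊥) (htop : W ≠ ⊤) :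
    W = Submodule.span k {((1 : k), (0 : k))} := by
  have h2 : (2 : k) = 0 := by exact_mod_cast CharP.cast_eq_zero k 2
  have hsnd : ∀ v ∈ W, v.2 = 0 := by
    intro v hv
    by_contra hb
    have h1 : dRAction k 1 1 v ∈ W :=
      hInv 1 0 1 (by ring) (by ring) (by ring) (by linear_combination h2) v hv
    have hw : ((v.2, (0 : k)) : k × k) ∈ W := by
      have := W.sub_mem h1 hv
      have heq : dRAction k 1 1 v - v = (v.2, 0) := by
        apply Prod.ext <;> simp [dRAction] <;> ring
      rwa [heq] at this
    have h10 : ((1 : k), (0 : k)) ∈ W := by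
      have := W.smul_mem v.2⁻¹ hw
      have heq : v.2⁻¹ • ((v.2, (0 : k)) : k × k) = (1, 0) := by
        apply Prod.ext <;> simp [inv_mul_cancel₀ hb]
      rwa [heq] at this
    have h01 : ((0 : k), (1 : k)) ∈ W := by
      have hm : ((0 : k), v.2) ∈ W := by
        have := W.sub_mem hv (W.smul_mem v.1 h10)
        have heq : v - v.1 • ((1 : k), (0 : k)) = (0, v.2) := by
          apply Prod.ext <;> simp
        rwa [heq] at this
      have := W.smul_mem v.2⁻¹ hm
      have heq : v.2⁻¹ • ((0 : k), v.2) = ((0 : k), (1 : k)) := by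
        apply Prod.ext <;> simp [inv_mul_cancel₀ hb]
      rwa [heq] at this
    apply htop
    rw [Submodule.eq_top_iff']
    intro x
    have := W.add_mem (W.smul_mem x.1 h10) (W.smul_mem x.2 h01)
    have heq : x.1 • ((1 : k), (0 : k)) + x.2 • ((0 : k), (1 : k)) = x := by
      apply Prod.ext <;> simp
    rwa [heq] at this
  apply le_antisymm
  · intro v hv
    rw [Submodule.mem_span_singleton]
    refine ⟨v.1, ?_⟩
    apply Prod.ext <;> simp [hsnd v hv]
  · obtain ⟨v, hv, hvne⟩ := Submodule.exists_mem_ne_zero_of_ne_bot hbot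
    have hv2 := hsnd v hv
    have hv1 : v.1 ≠ 0 := by
      intro h
      exact hvne (Prod.ext h hv2)
    rw [Submodule.span_le, Set.singleton_subset_iff]
    have := W.smul_mem v.1⁻¹ hv
    have heq : v.1⁻¹ • v = ((1 : k), (0 : k)) := by
      apply Prod.ext <;> simp [hv2, inv_mul_cancel₀ hv1]
    rwa [heq] at this

end aux

/-- Let `E : y² + y = x³` over an algebraically closed field `k` of characteristic `2`, with
`V = H¹_dR(E/k)` two-dimensional with basis `v₁, v₂`, and the group
`A = {(u,r,t) : u ∈ 𝔽₄ˣ, t ∈ 𝔽₄, t² + t + r³ = 0}` acting by `g_{u,r,t}·v₁ = u²v₁`,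
`g_{u,r,t}·v₂ = u²t·v₁ + u·v₂`.  Then `V` has exactly one nonzero proper `A`-invariant
subspace, namely `span(v₁)`; in particular `V` is an indecomposable `k[A]`-module. -/
theorem stmt_16 (k : Type*) [Field k] [IsAlgClosed k] [CharP k 2] :
    ({W : Submodule k (k × k) | dRInvariant k W ∧ W ≠ ⊥ ∧ W ≠ ⊤} =
        {Submodule.span k {((1 : k), (0 : k))}}) ∧
      ¬ ∃ W₁ W₂ : Submodule k (k × k), dRInvariant k W₁ ∧ dRInvariant k W₂ ∧
        IsCompl W₁ W₂ ∧ W₁ ≠ ⊥ ∧ W₂ ≠ ⊥ := by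
  constructor
  · ext W
    simp only [Set.mem_setOf_eq, Set.mem_singleton_iff]
    constructor
    · rintro ⟨hInv, hbot, htop⟩
      exact key_lemma k W hInv hbot htop
    · rintro rfl
      exact span_props k
  · rintro ⟨W₁, W₂, hI1, hI2, hc, hb1, hb2⟩
    have ht1 : W₁ ≠ ⊤ := by
      rintro rfl
      exact hb2 (top_disjoint.mp hc.disjoint)
    have ht2 : W₂ ≠ ⊤ := by
      rintro rfl
      exact hb1 (disjoint_top.mp hc.disjoint)
    have e1 := key_lemma k W₁ hI1 hb1 ht1
    have e2 := key_lemma k W₂ hI2 hb2 ht2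
    apply hb1
    have := hc.disjoint
    rw [e1, e2, disjoint_self] at this
    rw [e1, this]
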